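/- Let q be a real number with q > 0 and q ≠ 1, let k ≥ 1 and n be natural numbers, and let x_1, …, x_{k+1} be real numbers with Λ = x_1 x_2 ⋯ x_{k+1}. Then ∏_{i=1}^{n} (1 − Λ q^{i−1}) = Σ C_q(n; r_1,…,r_k) · [ ∏_{j=1}^{k} x_j^{n − s_j} · ∏_{i=1}^{r_j} (1 − x_j q^{i−1}) ] · ∏_{i=1}^{n − s_k} (1 − x_{k+1} q^{i−1}), where the sum is over all tuples (r_1,…,r_k) of natural numbers with r_1 + ⋯ + r_k ≤ n, and s_j = r_1 + ⋯ + r_j. -/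

import Mathlib

noncomputable def qNum (q : ℝ) (m : ℤ) : ℝ := (1 - q ^ m) / (1 - q)

noncomputable def qFactorial (q : ℝ) (n : ℕ) : ℝ :=
  ∏ i ∈ Finset.range n, qNum q ((i : ℤ) + 1)

noncomputable def qFacOrd (q : ℝ) (x : ℤ) (r : ℕ) : ℝ :=
  ∏ i ∈ Finset.range r, qNum q (x - (i : ℤ))

lemma my_pow_ne_one {q : ℝ} (hq : 0 < q) (hq1 : q ≠ 1) (m : ℕ) (hm : 1 ≤ m) : q ^ m ≠ 1 := by
  rcases lt_or_gt_of_ne hq1 with h | h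
  · exact ne_of_lt (pow_lt_one₀ hq.le h (by omega))
  · exact ne_of_gt (one_lt_pow₀ h (by omega))

lemma qNum_ne_zero {q : ℝ} (hq : 0 < q) (hq1 : q ≠ 1) (m : ℕ) (hm : 1 ≤ m) :
    qNum q (m : ℤ) ≠ 0 := by
  unfold qNum
  rw [zpow_natCast]
  exact div_ne_zero (sub_ne_zero.2 (Ne.symm (my_pow_ne_one hq hq1 m hm)))
    (sub_ne_zero.2 (Ne.symm hq1))

lemma qFactorial_ne_zero {q : ℝ} (hq : 0 < q) (hq1 : q ≠ 1) (n : ℕ) : qFactorial q n ≠ 0 := by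
  unfold qFactorial
  rw [Finset.prod_ne_zero_iff]
  intro i _
  have : ((i : ℤ) + 1) = ((i + 1 : ℕ) : ℤ) := by push_cast; ring
  rw [this]
  exact qNum_ne_zero hq hq1 _ (by omega)

lemma qFacOrd_succ_right (q : ℝ) (x : ℤ) (r : ℕ) :
    qFacOrd q x (r + 1) = qFacOrd q x r * qNum q (x - r) := by
  simp [qFacOrd, Finset.prod_range_succ]

lemma qFacOrd_succ_left (q : ℝ) (x : ℤ) (r : ℕ) :
    qFacOrd q (x + 1) (r + 1) = qNum q (x + 1) * qFacOrd q x r := by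
  unfold qFacOrd
  rw [Finset.prod_range_succ']
  simp only [Nat.cast_zero, sub_zero]
  rw [mul_comm]
  congr 1
  apply Finset.prod_congr rfl
  intro i _
  congr 1
  push_cast
  ring

lemma qFacOrd_eq_zero (q : ℝ) (n : ℕ) (r : ℕ) (h : n < r) : qFacOrd q (n : ℤ) r = 0 := by
  unfold qFacOrd
  apply Finset.prod_eq_zero (Finset.mem_range.2 h)
  simp [qNum]

lemma qNum_pascal {q : ℝ} (hq : 0 < q) (hq1 : q ≠ 1) (x : ℤ) (r : ℕ) :
    qNum q (x + 1) = q ^ ((r : ℤ) + 1) * qNum q (x - r) + qNum q ((r : ℤ) + 1) := by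
  have h0 : q ≠ 0 := ne_of_gt hq
  have h1 : (1 : ℝ) - q ≠ 0 := sub_ne_zero.2 (Ne.symm hq1)
  unfold qNum
  field_simp
  rw [show (x : ℤ) + 1 = ((r:ℤ)+1) + (x - r) by ring, zpow_add₀ h0]
  ring

noncomputable def qMultinomial (q : ℝ) (x : ℤ) {k : ℕ} (r : Fin k → ℕ) : ℝ :=
  qFacOrd q x (∑ j, r j) / ∏ j, qFactorial q (r j)

noncomputable def qBinom (q : ℝ) (n r : ℕ) : ℝ := qFacOrd q n r / qFactorial q r

lemma qBinom_zero (q : ℝ) (n : ℕ) : qBinom q n 0 = 1 := by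
  simp [qBinom, qFacOrd, qFactorial]

lemma qBinom_eq_zero (q : ℝ) (n r : ℕ) (h : n < r) : qBinom q n r = 0 := by
  simp [qBinom, qFacOrd_eq_zero q n r h]

lemma qBinom_pascal {q : ℝ} (hq : 0 < q) (hq1 : q ≠ 1) (n r : ℕ) :
    qBinom q (n + 1) (r + 1) = q ^ (r + 1) * qBinom q n (r + 1) + qBinom q n r := by
  unfold qBinom
  have hfr : qFactorial q r ≠ 0 := qFactorial_ne_zero hq hq1 r
  have hfr1 : qFactorial q (r + 1) ≠ 0 := qFactorial_ne_zero hq hq1 (r + 1)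
  have hfs : qFactorial q (r + 1) = qFactorial q r * qNum q ((r : ℤ) + 1) := by
    simp [qFactorial, Finset.prod_range_succ]
  have hnum : qNum q ((r : ℤ) + 1) ≠ 0 := by
    intro h; rw [hfs, h, mul_zero] at hfr1; exact hfr1 rfl
  have hleft : qFacOrd q ((n : ℤ) + 1) (r + 1) = qNum q ((n:ℤ) + 1) * qFacOrd q n r :=
    qFacOrd_succ_left q n r
  have hright : qFacOrd q (n : ℤ) (r + 1) = qFacOrd q n r * qNum q ((n:ℤ) - r) :=
    qFacOrd_succ_right q n r
  have hcast : ((n + 1 : ℕ) : ℤ) = (n : ℤ) + 1 := by push_cast; ring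
  rw [hcast, hleft, hright, hfs]
  rw [qNum_pascal hq hq1 (n : ℤ) r]
  have : (q : ℝ) ^ ((r : ℤ) + 1) = q ^ (r + 1) := by
    rw [← zpow_natCast]; push_cast; ring_nf
  rw [this]
  field_simp

-- q-binomial product identity
lemma qBinom_formula {q : ℝ} (hq : 0 < q) (hq1 : q ≠ 1) (n : ℕ) (a b : ℝ) :
    ∏ i ∈ Finset.range n, (1 - a * b * q ^ i) =
      ∑ r ∈ Finset.range (n + 1), qBinom q n r * a ^ (n - r) *
        (∏ i ∈ Finset.range r, (1 - a * q ^ i)) *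
        (∏ i ∈ Finset.range (n - r), (1 - b * q ^ i)) := by
  induction n with
  | zero => simp [qBinom_zero]
  | succ n ih =>
    rw [Finset.prod_range_succ, ih]
    -- RHS(n+1):
    rw [Finset.sum_range_succ' (fun r => qBinom q (n+1) r * a ^ (n + 1 - r) *
        (∏ i ∈ Finset.range r, (1 - a * q ^ i)) *
        (∏ i ∈ Finset.range (n + 1 - r), (1 - b * q ^ i))) (n+1)]
    -- term at 0:
    have h0 : qBinom q (n+1) 0 * a ^ (n + 1 - 0) *
        (∏ i ∈ Finset.range 0, (1 - a * q ^ i)) *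
        (∏ i ∈ Finset.range (n + 1 - 0), (1 - b * q ^ i)) =
        q ^ 0 * qBinom q n 0 * a ^ (n + 1 - 0) *
        (∏ i ∈ Finset.range 0, (1 - a * q ^ i)) *
        (∏ i ∈ Finset.range (n + 1 - 0), (1 - b * q ^ i)) := by
      simp [qBinom_zero]
    rw [h0]
    -- split sum via pascal
    have hsplit : ∀ s ∈ Finset.range (n+1),
        qBinom q (n+1) (s+1) * a ^ (n + 1 - (s+1)) *
        (∏ i ∈ Finset.range (s+1), (1 - a * q ^ i)) *
        (∏ i ∈ Finset.range (n + 1 - (s+1)), (1 - b * q ^ i)) =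
        (q ^ (s+1) * qBinom q n (s+1) * a ^ (n + 1 - (s+1)) *
          (∏ i ∈ Finset.range (s+1), (1 - a * q ^ i)) *
          (∏ i ∈ Finset.range (n + 1 - (s+1)), (1 - b * q ^ i))) +
        (qBinom q n s * a ^ (n - s) *
          (∏ i ∈ Finset.range (s+1), (1 - a * q ^ i)) *
          (∏ i ∈ Finset.range (n - s), (1 - b * q ^ i))) := by
      intro s hs
      rw [qBinom_pascal hq hq1 n s]
      have e1 : n + 1 - (s + 1) = n - s := by omega
      rw [e1]
      ring
    rw [Finset.sum_congr rfl hsplit, Finset.sum_add_distrib]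
    -- Now: (Σ A_s) + (Σ C_s) + f0  with f0 = g 0 pattern; combine Σ A_s + f0 = D
    -- A_s = g (s+1) where g t = q^t B(n,t) a^{n+1-t} Pa(t) Pb(n+1-t)
    set g : ℕ → ℝ := fun t => q ^ t * qBinom q n t * a ^ (n + 1 - t) *
        (∏ i ∈ Finset.range t, (1 - a * q ^ i)) *
        (∏ i ∈ Finset.range (n + 1 - t), (1 - b * q ^ i)) with hg
    have hA : ∀ s ∈ Finset.range (n+1),
        q ^ (s+1) * qBinom q n (s+1) * a ^ (n + 1 - (s+1)) *
          (∏ i ∈ Finset.range (s+1), (1 - a * q ^ i)) *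
          (∏ i ∈ Finset.range (n + 1 - (s+1)), (1 - b * q ^ i)) = g (s+1) := by
      intro s _; rfl
    rw [Finset.sum_congr rfl hA]
    have hD : (∑ s ∈ Finset.range (n+1), g (s+1)) + g 0 = ∑ t ∈ Finset.range (n+1), g t := by
      rw [← Finset.sum_range_succ' g (n+1), Finset.sum_range_succ]
      have : g (n+1) = 0 := by
        simp [hg, qBinom_eq_zero q n (n+1) (by omega)]
      rw [this, add_zero]
    have hgoal : (∑ s ∈ Finset.range (n+1), g (s+1)) +
        (∑ s ∈ Finset.range (n+1), qBinom q n s * a ^ (n - s) *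
          (∏ i ∈ Finset.range (s+1), (1 - a * q ^ i)) *
          (∏ i ∈ Finset.range (n - s), (1 - b * q ^ i))) + g 0 =
        ∑ t ∈ Finset.range (n+1), (g t + qBinom q n t * a ^ (n - t) *
          (∏ i ∈ Finset.range (t+1), (1 - a * q ^ i)) *
          (∏ i ∈ Finset.range (n - t), (1 - b * q ^ i))) := by
      rw [Finset.sum_add_distrib, ← hD]; ring
    rw [hgoal]
    rw [Finset.sum_mul]
    apply Finset.sum_congr rfl
    intro t ht
    have htn : t ≤ n := by simpa [Nat.lt_succ_iff] using Finset.mem_range.1 ht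
    have e1 : n + 1 - t = (n - t) + 1 := by omega
    have e2 : a ^ (n + 1 - t) = a * a ^ (n - t) := by
      rw [show n + 1 - t = (n - t) + 1 by omega]; ring
    have e3 : ∏ i ∈ Finset.range (n + 1 - t), (1 - b * q ^ i) =
        (∏ i ∈ Finset.range (n - t), (1 - b * q ^ i)) * (1 - b * q ^ (n - t)) := by
      rw [e1, Finset.prod_range_succ]
    have e4 : ∏ i ∈ Finset.range (t + 1), (1 - a * q ^ i) =
        (∏ i ∈ Finset.range t, (1 - a * q ^ i)) * (1 - a * q ^ t) := Finset.prod_range_succ _ _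
    have e5 : (q:ℝ) ^ t * q ^ (n - t) = q ^ n := by
      rw [← pow_add]; congr 1; omega
    simp only [hg, e2, e3, e4]
    linear_combination ((qBinom q n t * a ^ (n - t) *
      (∏ i ∈ Finset.range t, (1 - a * q ^ i)) *
      (∏ i ∈ Finset.range (n - t), (1 - b * q ^ i)) * a * b)) * e5

lemma qFacOrd_add (q : ℝ) (x : ℤ) (a m : ℕ) :
    qFacOrd q x (a + m) = qFacOrd q x a * qFacOrd q (x - a) m := by
  unfold qFacOrd
  rw [Finset.prod_range_add]
  congr 1
  apply Finset.prod_congr rfl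
  intro i _
  congr 1
  push_cast
  ring

lemma qMult_cons (q : ℝ) {k : ℕ} (n : ℕ) (a : ℕ) (g : Fin k → ℕ) (ha : a ≤ n) :
    qMultinomial q (n : ℤ) (Fin.cons a g) =
      qBinom q n a * qMultinomial q ((n - a : ℕ) : ℤ) g := by
  unfold qMultinomial qBinom
  rw [Fin.sum_cons, qFacOrd_add, Fin.prod_univ_succ]
  simp only [Fin.cons_zero, Fin.cons_succ]
  have : ((n : ℤ) - a) = ((n - a : ℕ) : ℤ) := by omega
  rw [this, div_mul_div_comm]

lemma cons_sum_le_zero {k : ℕ} (a : ℕ) (g : Fin k → ℕ) :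
    ∑ i' ∈ Finset.univ.filter (fun i' => i' ≤ (0 : Fin (k+1))), (Fin.cons a g : Fin (k+1) → ℕ) i' = a := by
  rw [Finset.sum_filter, Fin.sum_univ_succ]
  simp [Fin.le_zero_iff, Fin.succ_ne_zero]

lemma cons_sum_le_succ {k : ℕ} (a : ℕ) (g : Fin k → ℕ) (j : Fin k) :
    ∑ i' ∈ Finset.univ.filter (fun i' => i' ≤ j.succ), (Fin.cons a g : Fin (k+1) → ℕ) i' =
      a + ∑ i' ∈ Finset.univ.filter (fun i' => i' ≤ j), g i' := by
  rw [Finset.sum_filter, Fin.sum_univ_succ, Finset.sum_filter]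
  simp [Fin.succ_le_succ_iff, Fin.zero_le]

lemma coe_cons {k n : ℕ} (a : Fin (n+1)) (g : Fin k → Fin (n+1)) :
    (fun j => ((Fin.cons a g : Fin (k+1) → Fin (n+1)) j : ℕ)) =
      Fin.cons (a : ℕ) (fun j => (g j : ℕ)) := by
  funext j
  refine Fin.cases ?_ ?_ j <;> simp

lemma sum_reindex (k n m : ℕ) (hmn : m ≤ n) (f : (Fin k → ℕ) → ℝ) :
    ∑ r ∈ Finset.univ.filter (fun r : Fin k → Fin (m + 1) => ∑ j, (r j : ℕ) ≤ m),
      f (fun j => (r j : ℕ)) =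
    ∑ r ∈ Finset.univ.filter (fun r : Fin k → Fin (n + 1) => ∑ j, (r j : ℕ) ≤ m),
      f (fun j => (r j : ℕ)) := by
  apply Finset.sum_nbij' (i := fun (r : Fin k → Fin (m+1)) => fun j => Fin.castLE (by omega) (r j))
    (j := fun (r : Fin k → Fin (n+1)) => fun j =>
      (⟨min (r j : ℕ) m, by omega⟩ : Fin (m+1)))
  · intro r hr
    simp only [Finset.mem_filter, Finset.mem_univ, true_and] at hr ⊢
    simpa using hr
  · intro r hr
    simp only [Finset.mem_filter, Finset.mem_univ, true_and] at hr ⊢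
    have hle : ∀ j, (r j : ℕ) ≤ m := fun j =>
      le_trans (Finset.single_le_sum (f := fun j => (r j : ℕ)) (fun i _ => Nat.zero_le _)
        (Finset.mem_univ j)) hr
    calc ∑ j, ((⟨min (r j : ℕ) m, by omega⟩ : Fin (m+1)) : ℕ) = ∑ j, (r j : ℕ) := by
          apply Finset.sum_congr rfl; intro j _; simp [Nat.min_eq_left (hle j)]
      _ ≤ m := hr
  · intro r hr
    simp only [Finset.mem_filter, Finset.mem_univ, true_and] at hr
    have hle : ∀ j, (r j : ℕ) ≤ m := fun j =>
      le_trans (Finset.single_le_sum (f := fun j => (r j : ℕ)) (fun i _ => Nat.zero_le _)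
        (Finset.mem_univ j)) hr
    funext j
    ext
    simp [Nat.min_eq_left (hle j)]
  · intro r hr
    simp only [Finset.mem_filter, Finset.mem_univ, true_and] at hr
    have hle : ∀ j, (r j : ℕ) ≤ m := fun j =>
      le_trans (Finset.single_le_sum (f := fun j => (r j : ℕ)) (fun i _ => Nat.zero_le _)
        (Finset.mem_univ j)) hr
    funext j
    ext
    simp [Nat.min_eq_left (hle j)]
  · intro r hr
    congr 1

lemma filter_le_zero_sum {k : ℕ} {M : Type*} [AddCommMonoid M] (f : Fin (k+1) → M) :
    ∑ i' ∈ Finset.univ.filter (fun i' => i' ≤ (0 : Fin (k+1))), f i' = f 0 := by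
  rw [Finset.sum_filter, Fin.sum_univ_succ]
  simp [Fin.le_zero_iff, Fin.succ_ne_zero]

lemma filter_le_succ_sum {k : ℕ} {M : Type*} [AddCommMonoid M] (f : Fin (k+1) → M) (j : Fin k) :
    ∑ i' ∈ Finset.univ.filter (fun i' => i' ≤ j.succ), f i' =
      f 0 + ∑ i' ∈ Finset.univ.filter (fun i' => i' ≤ j), f i'.succ := by
  rw [Finset.sum_filter, Fin.sum_univ_succ, Finset.sum_filter]
  simp [Fin.succ_le_succ_iff, Fin.zero_le]

/-- specialized reindexing for the main body -/
lemma sum_reindex' (q : ℝ) (k n m : ℕ) (hmn : m ≤ n) (x' : Fin (k+1) → ℝ) :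
    (∑ r ∈ Finset.univ.filter (fun r : Fin k → Fin (m + 1) => ∑ j, (r j : ℕ) ≤ m),
        qMultinomial q (m : ℤ) (fun j => (r j : ℕ)) *
          (∏ j : Fin k,
            x' j.castSucc ^ (m - ∑ i' ∈ Finset.univ.filter (fun i' => i' ≤ j), (r i' : ℕ)) *
              ∏ i ∈ Finset.range (r j : ℕ), (1 - x' j.castSucc * q ^ i)) *
          ∏ i ∈ Finset.range (m - ∑ j, (r j : ℕ)), (1 - x' (Fin.last k) * q ^ i)) =
    (∑ r ∈ Finset.univ.filter (fun r : Fin k → Fin (n + 1) => ∑ j, (r j : ℕ) ≤ m),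
        qMultinomial q (m : ℤ) (fun j => (r j : ℕ)) *
          (∏ j : Fin k,
            x' j.castSucc ^ (m - ∑ i' ∈ Finset.univ.filter (fun i' => i' ≤ j), (r i' : ℕ)) *
              ∏ i ∈ Finset.range (r j : ℕ), (1 - x' j.castSucc * q ^ i)) *
          ∏ i ∈ Finset.range (m - ∑ j, (r j : ℕ)), (1 - x' (Fin.last k) * q ^ i)) := by
  exact sum_reindex k n m hmn (fun t =>
    qMultinomial q (m : ℤ) t *
      (∏ j : Fin k,
        x' j.castSucc ^ (m - ∑ i' ∈ Finset.univ.filter (fun i' => i' ≤ j), t i') *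
          ∏ i ∈ Finset.range (t j), (1 - x' j.castSucc * q ^ i)) *
      ∏ i ∈ Finset.range (m - ∑ j, t j), (1 - x' (Fin.last k) * q ^ i))

lemma main_aux (q : ℝ) (hq : 0 < q) (hq1 : q ≠ 1) :
    ∀ (k n : ℕ) (x : Fin (k + 1) → ℝ),
    ∏ i ∈ Finset.range n, (1 - (∏ j, x j) * q ^ i) =
      ∑ r ∈ Finset.univ.filter (fun r : Fin k → Fin (n + 1) => ∑ j, (r j : ℕ) ≤ n),
        qMultinomial q (n : ℤ) (fun j => (r j : ℕ)) *
          (∏ j : Fin k,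
            x j.castSucc ^ (n - ∑ i' ∈ Finset.univ.filter (fun i' => i' ≤ j), (r i' : ℕ)) *
              ∏ i ∈ Finset.range (r j : ℕ), (1 - x j.castSucc * q ^ i)) *
          ∏ i ∈ Finset.range (n - ∑ j, (r j : ℕ)), (1 - x (Fin.last k) * q ^ i) := by
  intro k
  induction k with
  | zero =>
    intro n x
    have huniv : (Finset.univ.filter (fun r : Fin 0 → Fin (n + 1) => ∑ j, (r j : ℕ) ≤ n)) =
        Finset.univ := by
      apply Finset.filter_true_of_mem
      intro r _
      simp
    rw [huniv]
    rw [Fintype.sum_unique]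
    simp [qMultinomial, qFacOrd, Fin.last, Fin.prod_univ_succ]
  | succ k ih =>
    intro n x
    rw [Fin.prod_univ_succ, qBinom_formula hq hq1 n (x 0) (∏ j : Fin (k+1), x j.succ)]
    -- rewrite each inner product with ih
    have step1 : ∀ r0 ∈ Finset.range (n+1),
        qBinom q n r0 * (x 0) ^ (n - r0) *
          (∏ i ∈ Finset.range r0, (1 - x 0 * q ^ i)) *
          (∏ i ∈ Finset.range (n - r0), (1 - (∏ j : Fin (k+1), x j.succ) * q ^ i)) =
        ∑ g ∈ Finset.univ.filter
            (fun g : Fin k → Fin (n + 1) => ∑ j, (g j : ℕ) ≤ n - r0),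
          (if r0 + ∑ j, (g j : ℕ) ≤ n then
            qBinom q n r0 * (x 0) ^ (n - r0) *
              (∏ i ∈ Finset.range r0, (1 - x 0 * q ^ i)) *
              (qMultinomial q ((n - r0 : ℕ) : ℤ) (fun j => (g j : ℕ)) *
                (∏ j : Fin k,
                  (fun j' => x (Fin.succ j')) j.castSucc ^
                      ((n - r0) - ∑ i' ∈ Finset.univ.filter (fun i' => i' ≤ j), (g i' : ℕ)) *
                    ∏ i ∈ Finset.range (g j : ℕ),
                      (1 - (fun j' => x (Fin.succ j')) j.castSucc * q ^ i)) *
                ∏ i ∈ Finset.range ((n - r0) - ∑ j, (g j : ℕ)),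
                  (1 - (fun j' => x (Fin.succ j')) (Fin.last k) * q ^ i))
          else 0) := by
      intro r0 hr0
      have hr0n : r0 ≤ n := by simpa [Nat.lt_succ_iff] using Finset.mem_range.1 hr0
      rw [ih (n - r0) (fun j' => x (Fin.succ j'))]
      rw [sum_reindex' q k n (n - r0) (by omega) (fun j' => x (Fin.succ j'))]
      rw [Finset.mul_sum]
      apply Finset.sum_congr rfl
      intro g hg
      have hcond : ∑ j, (g j : ℕ) ≤ n - r0 := (Finset.mem_filter.1 hg).2
      rw [if_pos (by omega)]
    rw [Finset.sum_congr rfl step1]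
    -- drop the filter on g
    have step2 : ∀ r0 ∈ Finset.range (n+1),
        (∑ g ∈ Finset.univ.filter
            (fun g : Fin k → Fin (n + 1) => ∑ j, (g j : ℕ) ≤ n - r0),
          (if r0 + ∑ j, (g j : ℕ) ≤ n then
            qBinom q n r0 * (x 0) ^ (n - r0) *
              (∏ i ∈ Finset.range r0, (1 - x 0 * q ^ i)) *
              (qMultinomial q ((n - r0 : ℕ) : ℤ) (fun j => (g j : ℕ)) *
                (∏ j : Fin k,
                  (fun j' => x (Fin.succ j')) j.castSucc ^
                      ((n - r0) - ∑ i' ∈ Finset.univ.filter (fun i' => i' ≤ j), (g i' : ℕ)) *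
                    ∏ i ∈ Finset.range (g j : ℕ),
                      (1 - (fun j' => x (Fin.succ j')) j.castSucc * q ^ i)) *
                ∏ i ∈ Finset.range ((n - r0) - ∑ j, (g j : ℕ)),
                  (1 - (fun j' => x (Fin.succ j')) (Fin.last k) * q ^ i))
          else 0)) =
        (∑ g : Fin k → Fin (n + 1),
          (if r0 + ∑ j, (g j : ℕ) ≤ n then
            qBinom q n r0 * (x 0) ^ (n - r0) *
              (∏ i ∈ Finset.range r0, (1 - x 0 * q ^ i)) *
              (qMultinomial q ((n - r0 : ℕ) : ℤ) (fun j => (g j : ℕ)) *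
                (∏ j : Fin k,
                  (fun j' => x (Fin.succ j')) j.castSucc ^
                      ((n - r0) - ∑ i' ∈ Finset.univ.filter (fun i' => i' ≤ j), (g i' : ℕ)) *
                    ∏ i ∈ Finset.range (g j : ℕ),
                      (1 - (fun j' => x (Fin.succ j')) j.castSucc * q ^ i)) *
                ∏ i ∈ Finset.range ((n - r0) - ∑ j, (g j : ℕ)),
                  (1 - (fun j' => x (Fin.succ j')) (Fin.last k) * q ^ i))
          else 0)) := by
      intro r0 hr0
      have hr0n : r0 ≤ n := by simpa [Nat.lt_succ_iff] using Finset.mem_range.1 hr0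
      rw [Finset.sum_filter]
      apply Finset.sum_congr rfl
      intro g _
      by_cases h : r0 + ∑ j, (g j : ℕ) ≤ n
      · rw [if_pos (by omega : ∑ j, (g j : ℕ) ≤ n - r0)]
      · simp [h]
    rw [Finset.sum_congr rfl step2]
    rw [← Fin.sum_univ_eq_sum_range (fun r0 =>
        (∑ g : Fin k → Fin (n + 1),
          (if r0 + ∑ j, (g j : ℕ) ≤ n then
            qBinom q n r0 * (x 0) ^ (n - r0) *
              (∏ i ∈ Finset.range r0, (1 - x 0 * q ^ i)) *
              (qMultinomial q ((n - r0 : ℕ) : ℤ) (fun j => (g j : ℕ)) *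
                (∏ j : Fin k,
                  (fun j' => x (Fin.succ j')) j.castSucc ^
                      ((n - r0) - ∑ i' ∈ Finset.univ.filter (fun i' => i' ≤ j), (g i' : ℕ)) *
                    ∏ i ∈ Finset.range (g j : ℕ),
                      (1 - (fun j' => x (Fin.succ j')) j.castSucc * q ^ i)) *
                ∏ i ∈ Finset.range ((n - r0) - ∑ j, (g j : ℕ)),
                  (1 - (fun j' => x (Fin.succ j')) (Fin.last k) * q ^ i))
          else 0))) (n+1)]
    -- now massage the RHS
    rw [Finset.sum_filter, ← Equiv.sum_comp (Fin.consEquiv (fun _ => Fin (n+1))),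
      Fintype.sum_prod_type]
    apply Finset.sum_congr rfl
    intro a _
    apply Finset.sum_congr rfl
    intro g _
    simp only [Fin.consEquiv_apply]
    have hsum : ∑ j, ((Fin.cons a g : Fin (k+1) → Fin (n+1)) j : ℕ) =
        (a : ℕ) + ∑ j, (g j : ℕ) := by
      rw [Fin.sum_univ_succ]
      simp
    rw [hsum]
    by_cases h : (a : ℕ) + ∑ j, (g j : ℕ) ≤ n
    · rw [if_pos h, if_pos h]
      -- term identity
      have ha : (a : ℕ) ≤ n := by omega
      rw [coe_cons, qMult_cons q n (a : ℕ) _ ha]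
      rw [Fin.prod_univ_succ]
      have h0 : ∑ i' ∈ Finset.univ.filter (fun i' => i' ≤ (0 : Fin (k+1))),
          (Fin.cons (a : ℕ) (fun j => (g j : ℕ)) : Fin (k+1) → ℕ) i' = (a : ℕ) := by
        rw [filter_le_zero_sum (Fin.cons (a : ℕ) (fun j => (g j : ℕ)))]
        simp
      have hj : ∀ j : Fin k, (∑ i' ∈ Finset.univ.filter (fun i' => i' ≤ j.succ),
          (Fin.cons (a : ℕ) (fun j => (g j : ℕ)) : Fin (k+1) → ℕ) i') =
          (a : ℕ) + ∑ i' ∈ Finset.univ.filter (fun i' => i' ≤ j), (g i' : ℕ) := by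
        intro j
        rw [filter_le_succ_sum (Fin.cons (a : ℕ) (fun j => (g j : ℕ))) j]
        simp
      simp only [Fin.cons_zero, Fin.cons_succ, Fin.castSucc_zero, h0, hj,
        Fin.succ_castSucc, Fin.succ_last, Nat.succ_eq_add_one, ← Nat.sub_sub]
      ring
    · rw [if_neg h, if_neg h]

/-- Alternative q-multinomial formula: with Λ = x_1 ⋯ x_{k+1},
    ∏_{i=1}^n (1 − Λ q^(i−1)) =
    Σ_{r, Σr_j ≤ n} C_q(n; r) [∏_j x_j^(n−s_j) ∏_{i=1}^{r_j} (1 − x_j q^(i−1))]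
      ∏_{i=1}^{n−s_k} (1 − x_{k+1} q^(i−1)). -/
theorem alt_qMultinomial_formula (q : ℝ) (hq : 0 < q) (hq1 : q ≠ 1)
    (k n : ℕ) (hk : 1 ≤ k) (x : Fin (k + 1) → ℝ) :
    ∏ i ∈ Finset.range n, (1 - (∏ j, x j) * q ^ i) =
      ∑ r ∈ Finset.univ.filter (fun r : Fin k → Fin (n + 1) => ∑ j, (r j : ℕ) ≤ n),
        qMultinomial q (n : ℤ) (fun j => (r j : ℕ)) *
          (∏ j : Fin k,
            x j.castSucc ^ (n - ∑ i' ∈ Finset.univ.filter (fun i' => i' ≤ j), (r i' : ℕ)) *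
              ∏ i ∈ Finset.range (r j : ℕ), (1 - x j.castSucc * q ^ i)) *
          ∏ i ∈ Finset.range (n - ∑ j, (r j : ℕ)), (1 - x (Fin.last k) * q ^ i) := by
  exact main_aux q hq hq1 k n x
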